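/- Let d ≥ 1, 1 ≤ i ≤ d, let X ⊆ A^{ℤ^d} be a subshift, and let ω : X → B^{ℤ^d} be a d-dimensional morphism whose restriction to letters is injective and such that the image of each letter is either a single letter or a domino in direction e_i. If there exists a subset M ⊂ B with ω(A) ⊆ (B∖M) ∪ (M ⊙^i (B∖M)), then ω is recognizable in X. -/

import Mathlib

/-- A shape of a `d`-dimensional word: a vector of side lengths. -/
abbrev Shape (d : ℕ) := Fin d → ℕ

/-- A finite `d`-dimensional word over alphabet `A`: a shape together with a
function from the corresponding box to `A`. -/
def FWord (A : Type*) (d : ℕ) := Σ n : Shape d, ((∀ j, Fin (n j)) → A)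

/-- The `d`-dimensional word of shape `(1,…,1)` corresponding to a letter. -/
def letter {A : Type*} (d : ℕ) (a : A) : FWord A d := ⟨fun _ => 1, fun _ => a⟩

/-- The concatenation `u ⊙^i v` is well-defined iff the shapes agree in all
coordinates except possibly coordinate `i`. -/
def CatOK {A : Type*} {d : ℕ} (i : Fin d) (u v : FWord A d) : Prop :=
  ∀ j, j ≠ i → u.1 j = v.1 j

/-- Shape of the concatenation in direction `e i`. -/
def catShape {d : ℕ} (i : Fin d) (n m : Shape d) : Shape d :=
  fun j => if j = i then n j + m j else n j

/-- Concatenation `u ⊙^i v` of two `d`-dimensional words in direction `e i`,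
defined when the shapes are compatible. -/
def cat {A : Type*} {d : ℕ} (i : Fin d) (u v : FWord A d) (h : CatOK i u v) :
    FWord A d :=
  ⟨catShape i u.1 v.1, fun a =>
    if hlt : (a i).1 < u.1 i then
      u.2 (fun j => ⟨(a j).1, by
        have h2 := (a j).2
        by_cases hj : j = i
        · subst hj; exact hlt
        · simp only [catShape, if_neg hj] at h2
          exact h2⟩)
    else
      v.2 (fun j => ⟨if j = i then (a j).1 - u.1 i else (a j).1, by
        have h2 := (a j).2
        simp only [catShape] at h2
        split
        · rename_i hj
          simp only [if_pos hj] at h2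
          subst hj
          omega
        · rename_i hj
          have h3 := h j hj
          simp only [if_neg hj] at h2
          omega⟩)⟩

/-- A `d`-dimensional morphism defined on all finite `d`-dimensional words:
whenever `u ⊙^i v` is well-defined, so is `ω u ⊙^i ω v`, and `ω` sends the
former concatenation to the latter. -/
def IsMorphism {A B : Type*} {d : ℕ} (ω : FWord A d → FWord B d) : Prop :=
  ∀ (i : Fin d) (u v : FWord A d) (h : CatOK i u v),
    ∃ h2 : CatOK i (ω u) (ω v), ω (cat i u v h) = cat i (ω u) (ω v) h2


/-- A configuration: a map `ℤ^d → A`. -/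
abbrev Config (A : Type*) (d : ℕ) := (Fin d → ℤ) → A

/-- The shift action: `(σ^k x)_m = x_{m+k}`. -/
def shift {A : Type*} {d : ℕ} (k : Fin d → ℤ) (x : Config A d) : Config A d :=
  fun m => x (m + k)

/-- A set of configurations is shift-invariant. -/
def ShiftInvariant {A : Type*} {d : ℕ} (X : Set (Config A d)) : Prop :=
  ∀ (k : Fin d → ℤ) (x : Config A d), x ∈ X → shift k x ∈ X

/-- A finite word occurs in a configuration (at some position). -/
def Occurs {A : Type*} {d : ℕ} (u : FWord A d) (x : Config A d) : Prop :=
  ∃ p : Fin d → ℤ, ∀ a : ∀ j, Fin (u.1 j),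
    x (fun j => p j + ((a j).1 : ℤ)) = u.2 a

/-- The language of a set of configurations: all finite subwords of its
members. -/
def SubLang {A : Type*} {d : ℕ} (X : Set (Config A d)) : Set (FWord A d) :=
  {u | ∃ x ∈ X, Occurs u x}

/-- The `j`-th canonical basis vector of `ℤ^d`. -/
def unitv {d : ℕ} (j : Fin d) : Fin d → ℤ := fun j' => if j' = j then 1 else 0

/-- `(k, x)` is an `ω`-representation of `y`, i.e. `y = σ^k ω(x)`:
there is a consistent placement function `p` assigning to each `n ∈ ℤ^d` the
position in `y` of the block `ω(x_n)`, with block origins advancing by the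
shapes of the blocks and `p 0 = -k`. -/
def OmegaRep {A B : Type*} {d : ℕ} (ω₀ : A → FWord B d) (y : Config B d)
    (k : Fin d → ℤ) (x : Config A d) : Prop :=
  ∃ p : (Fin d → ℤ) → (Fin d → ℤ),
    p 0 = -k ∧
    (∀ (n : Fin d → ℤ) (j : Fin d),
      p (n + unitv j) = p n + (((ω₀ (x n)).1 j : ℤ) • unitv j)) ∧
    (∀ (n : Fin d → ℤ) (a : ∀ j, Fin ((ω₀ (x n)).1 j)),
      y (fun j => p n j + ((a j).1 : ℤ)) = (ω₀ (x n)).2 a)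

/-- The `ω`-representation `(k, x)` is centered if `0 ≤ k < shape (ω (x 0))`
coordinate-wise. -/
def Centered {A B : Type*} {d : ℕ} (ω₀ : A → FWord B d)
    (k : Fin d → ℤ) (x : Config A d) : Prop :=
  ∀ j, 0 ≤ k j ∧ k j < ((ω₀ (x 0)).1 j : ℤ)

/-- `ω` is recognizable in `X`: every configuration has at most one centered
`ω`-representation with `x ∈ X`. -/
def Recognizable {A B : Type*} {d : ℕ} (ω₀ : A → FWord B d)
    (X : Set (Config A d)) : Prop :=
  ∀ (y : Config B d) (k k' : Fin d → ℤ) (x x' : Config A d),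
    x ∈ X → x' ∈ X →
    OmegaRep ω₀ y k x → Centered ω₀ k x →
    OmegaRep ω₀ y k' x' → Centered ω₀ k' x' → k = k' ∧ x = x'

/-- A set of configurations is aperiodic if it is nonempty and contains no
point with a nontrivial period. -/
def Aperiodic {A : Type*} {d : ℕ} (X : Set (Config A d)) : Prop :=
  X.Nonempty ∧ ∀ x ∈ X, ∀ p : Fin d → ℤ, p ≠ 0 → shift p x ≠ x

/-- The domino `b ⊙^i c` in direction `e i`: the `d`-dimensional word of shape
`(1,…,1) + e i` with first letter `b` and second letter `c`. -/
def domino {B : Type*} {d : ℕ} (i : Fin d) (b c : B) : FWord B d :=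
  ⟨fun j => if j = i then 2 else 1, fun a => if (a i).1 = 0 then b else c⟩

/-- The value condition of an `ω`-representation. -/
def HVal {A B : Type*} {d : ℕ} (ω₀ : A → FWord B d) (y : Config B d)
    (x : Config A d) (p : (Fin d → ℤ) → (Fin d → ℤ)) : Prop :=
  ∀ (n : Fin d → ℤ) (a : ∀ j, Fin ((ω₀ (x n)).1 j)),
    y (fun j => p n j + ((a j).1 : ℤ)) = (ω₀ (x n)).2 a

/-- The step condition of an `ω`-representation. -/
def HStep {A B : Type*} {d : ℕ} (ω₀ : A → FWord B d)
    (x : Config A d) (p : (Fin d → ℤ) → (Fin d → ℤ)) : Prop :=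
  ∀ (n : Fin d → ℤ) (j : Fin d),
    p (n + unitv j) = p n + (((ω₀ (x n)).1 j : ℤ) • unitv j)

/-- The marker condition. -/
def HMarker {A B : Type*} {d : ℕ} (i : Fin d) (ω₀ : A → FWord B d)
    (M : Set B) : Prop :=
  ∀ a : A, (∃ b, b ∉ M ∧ ω₀ a = letter d b) ∨
    ∃ b c, b ∈ M ∧ c ∉ M ∧ ω₀ a = domino i b c

section MarkerHelpers

variable {A B : Type*} {d : ℕ} {i : Fin d} {ω₀ : A → FWord B d} {M : Set B}
  {y : Config B d} {x : Config A d} {p : (Fin d → ℤ) → (Fin d → ℤ)}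

lemma shape_one (hM : HMarker i ω₀ M) (a : A) {j : Fin d} (hj : j ≠ i) :
    (ω₀ a).1 j = 1 := by
  rcases hM a with ⟨b, -, hb⟩ | ⟨b, c, -, -, hb⟩ <;> rw [hb]
  · rfl
  · simp [domino, hj]

lemma shape_i_cases (hM : HMarker i ω₀ M) (a : A) :
    (ω₀ a).1 i = 1 ∨ (ω₀ a).1 i = 2 := by
  rcases hM a with ⟨b, -, hb⟩ | ⟨b, c, -, -, hb⟩ <;> rw [hb]
  · exact Or.inl rfl
  · right; simp [domino]

lemma read_letter (hv : HVal ω₀ y x p) (n : Fin d → ℤ) {b : B}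
    (hb : ω₀ (x n) = letter d b) : y (p n) = b := by
  have h1 := hv n
  rw [hb] at h1
  have h2 := h1 (fun _ => ⟨0, Nat.one_pos⟩)
  simpa [letter] using h2

lemma read_domino (hv : HVal ω₀ y x p) (n : Fin d → ℤ) {b c : B}
    (hb : ω₀ (x n) = domino i b c) :
    y (p n) = b ∧ y (fun j => p n j + unitv i j) = c := by
  have h1 := hv n
  rw [hb] at h1
  constructor
  · have h2 := h1 (fun j => ⟨0, by simp only [domino]; split <;> omega⟩)
    simpa [domino] using h2
  · have h2 := h1 (fun j => ⟨if j = i then 1 else 0,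
      by simp only [domino]; split <;> omega⟩)
    have h3 : (fun j => p n j + unitv i j)
        = (fun j => p n j + (((if j = i then 1 else 0 : ℕ) : ℤ))) := by
      funext j
      simp only [unitv]
      split <;> simp
    rw [h3, h2]
    simp [domino]

lemma mark_iff (hM : HMarker i ω₀ M) (hv : HVal ω₀ y x p) (n : Fin d → ℤ) :
    y (p n) ∈ M ↔ (ω₀ (x n)).1 i = 2 := by
  rcases hM (x n) with ⟨b, hbM, hb⟩ | ⟨b, c, hbM, hcM, hb⟩
  · rw [read_letter hv n hb, hb]
    simp only [letter]
    constructor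
    · intro h; exact absurd h hbM
    · omega
  · rw [(read_domino hv n hb).1, hb]
    simp only [domino, if_pos rfl]
    exact ⟨fun _ => rfl, fun _ => hbM⟩

lemma last_notmem (hM : HMarker i ω₀ M) (hv : HVal ω₀ y x p)
    (hs : HStep ω₀ x p) (n : Fin d → ℤ) :
    y (fun j => p (n + unitv i) j - unitv i j) ∉ M := by
  have h1 := hs n i
  rcases hM (x n) with ⟨b, hbM, hb⟩ | ⟨b, c, hbM, hcM, hb⟩
  · rw [hb] at h1
    have h2 := read_letter hv n hb
    have h3 : (fun j => p (n + unitv i) j - unitv i j) = p n := by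
      funext j
      rw [h1]
      simp [letter]
    rw [h3, h2]; exact hbM
  · rw [hb] at h1
    have h2 := (read_domino hv n hb).2
    have h3 : (fun j => p (n + unitv i) j - unitv i j)
        = (fun j => p n j + unitv i j) := by
      funext j
      rw [h1]
      simp only [domino, Pi.add_apply, Pi.smul_apply, smul_eq_mul]
      push_cast
      ring
    rw [h3, h2]; exact hcM

lemma back_iff (hM : HMarker i ω₀ M) (hv : HVal ω₀ y x p)
    (hs : HStep ω₀ x p) (m : Fin d → ℤ) :
    (ω₀ (x m)).1 i = 2 ↔ y (fun j => p (m + unitv i) j - 2 * unitv i j) ∈ M := by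
  have h1 := hs m i
  rcases shape_i_cases hM (x m) with hsi | hsi
  · rw [hsi]
    have h3 : (fun j => p (m + unitv i) j - 2 * unitv i j)
        = (fun j => p (m - unitv i + unitv i) j - unitv i j) := by
      funext j
      rw [h1, hsi, sub_add_cancel]
      simp only [Pi.add_apply, Pi.smul_apply, smul_eq_mul]
      push_cast
      ring
    constructor
    · omega
    · intro h
      rw [h3] at h
      exact absurd h (last_notmem hM hv hs (m - unitv i))
  · rw [hsi]
    have h3 : (fun j => p (m + unitv i) j - 2 * unitv i j) = p m := by
      funext j
      rw [h1, hsi]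
      simp only [Pi.add_apply, Pi.smul_apply, smul_eq_mul]
      push_cast
      ring
    rw [h3]
    simp only [iff_true_intro rfl, true_iff]
    exact (mark_iff hM hv m).2 hsi

lemma pTranslate (hM : HMarker i ω₀ M) (hs : HStep ω₀ x p)
    {j : Fin d} (hj : j ≠ i) (c : ℤ) (n : Fin d → ℤ) :
    p (n + c • unitv j) = p n + c • unitv j := by
  have hstep1 : ∀ m : Fin d → ℤ, p (m + unitv j) = p m + unitv j := by
    intro m
    have := hs m j
    rwa [shape_one hM (x m) hj, Nat.cast_one, one_smul] at this
  induction c using Int.induction_on with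
  | zero => simp
  | succ c ih =>
      have h1 : n + ((c : ℤ) + 1) • unitv j = (n + (c : ℤ) • unitv j) + unitv j := by
        funext j'
        simp only [Pi.add_apply, Pi.smul_apply, smul_eq_mul]
        ring
      rw [h1, hstep1, ih]
      funext j'
      simp only [Pi.add_apply, Pi.smul_apply, smul_eq_mul]
      ring
  | pred c ih =>
      have h1 : (n + (-(c : ℤ) - 1) • unitv j) + unitv j = n + (-(c : ℤ)) • unitv j := by
        funext j'
        simp only [Pi.add_apply, Pi.smul_apply, smul_eq_mul]
        ring
      have h2 := hstep1 (n + (-(c : ℤ) - 1) • unitv j)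
      rw [h1, ih] at h2
      have h3 := h2.symm
      funext j'
      have := congrFun h3 j'
      simp only [Pi.add_apply, Pi.smul_apply, smul_eq_mul] at this ⊢
      ring_nf at this ⊢
      linarith

lemma move (hM : HMarker i ω₀ M) (hs : HStep ω₀ x p)
    (n m : Fin d → ℤ) (hm : m i = 0) : p (n + m) = p n + m := by
  classical
  suffices h : ∀ S : Finset (Fin d), i ∉ S → ∀ (n m : Fin d → ℤ),
      (∀ j, m j ≠ 0 → j ∈ S) → p (n + m) = p n + m by
    refine h (Finset.univ.erase i) (Finset.notMem_erase i _) n m ?_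
    intro j hj
    refine Finset.mem_erase.2 ⟨?_, Finset.mem_univ j⟩
    intro hji; exact hj (hji ▸ hm)
  intro S
  induction S using Finset.induction_on with
  | empty =>
      intro _ n m hm
      have : m = 0 := by
        funext j
        by_contra h
        exact absurd (hm j h) (Finset.notMem_empty j)
      rw [this, add_zero, add_zero]
  | @insert a S ha ih =>
      intro hiS n m hm
      have hai : a ≠ i := fun h => hiS (h ▸ Finset.mem_insert_self a S)
      have hiS' : i ∉ S := fun h => hiS (Finset.mem_insert_of_mem h)
      set m' : Fin d → ℤ := fun j => if j = a then 0 else m j with hm'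
      have hdec : n + m = (n + m') + (m a) • unitv a := by
        funext j
        simp only [Pi.add_apply, Pi.smul_apply, smul_eq_mul, hm', unitv]
        by_cases hja : j = a <;> simp [hja]
      have hm'S : ∀ j, m' j ≠ 0 → j ∈ S := by
        intro j hj
        simp only [hm'] at hj
        by_cases hja : j = a
        · simp [hja] at hj
        · rcases Finset.mem_insert.1 (hm j (by simpa [hja] using hj)) with h | h
          · exact absurd h hja
          · exact h
      rw [hdec, pTranslate hM hs hai, ih hiS' n m' hm'S]
      funext j
      simp only [Pi.add_apply, Pi.smul_apply, smul_eq_mul, hm', unitv]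
      by_cases hja : j = a <;> simp [hja]

end MarkerHelpers

/-- Marker-based recognizability criterion (markers on the left): if the
images of letters under `ω` are letters or dominoes in direction `e i`, `ω` is
injective on letters, and there is a set of markers `M ⊆ B` such that every
image is either a non-marker letter or a domino whose first letter is a
marker and whose second letter is a non-marker, then `ω` is recognizable
in `X`. -/
theorem recognizable_of_markers_left {A B : Type*} {d : ℕ} (i : Fin d)
    [TopologicalSpace A] [DiscreteTopology A]
    (X : Set (Config A d)) (hXinv : ShiftInvariant X) (hXcl : IsClosed X)
    (ω₀ : A → FWord B d) (hinj : Function.Injective ω₀)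
    (hshape : ∀ a : A, (∃ b : B, ω₀ a = letter d b) ∨
      ∃ b c : B, ω₀ a = domino i b c)
    (M : Set B)
    (hM : ∀ a : A, (∃ b, b ∉ M ∧ ω₀ a = letter d b) ∨
      ∃ b c, b ∈ M ∧ c ∉ M ∧ ω₀ a = domino i b c) :
    Recognizable ω₀ X := by
  intro y k k' x x' _hx _hx' hrep hcen hrep' hcen'
  obtain ⟨p, hp0, hs, hv⟩ := hrep
  obtain ⟨p', hp0', hs', hv'⟩ := hrep'
  have hM' : HMarker i ω₀ M := hM
  have hvv : HVal ω₀ y x p := hv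
  have hvv' : HVal ω₀ y x' p' := hv'
  have hss : HStep ω₀ x p := hs
  have hss' : HStep ω₀ x' p' := hs'
  -- off-axis coordinates of the centering vectors vanish
  have hk0 : ∀ j, j ≠ i → k j = 0 := by
    intro j hj
    have h1 := hcen j
    rw [shape_one hM' (x 0) hj] at h1
    omega
  have hk0' : ∀ j, j ≠ i → k' j = 0 := by
    intro j hj
    have h1 := hcen' j
    rw [shape_one hM' (x' 0) hj] at h1
    omega
  have hbound : ∀ (kk : Fin d → ℤ) (xx : Config A d), Centered ω₀ kk xx →
      kk i = 0 ∨ kk i = 1 := by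
    intro kk xx hc
    have h1 := hc i
    rcases shape_i_cases hM' (xx 0) with h | h <;> rw [h] at h1 <;> omega
  -- the i-th coordinate of the centering vector is determined by y
  have hkc : ∀ (kk : Fin d → ℤ) (xx : Config A d)
      (pp : (Fin d → ℤ) → (Fin d → ℤ)),
      HVal ω₀ y xx pp → HStep ω₀ xx pp → pp 0 = -kk → Centered ω₀ kk xx →
      (∀ j, j ≠ i → kk j = 0) →
      ((y (fun j => -(unitv i j)) ∈ M) ↔ kk i = 1) := by
    intro kk xx pp hv hs hp0 hc hk0
    rcases hbound kk xx hc with h | h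
    · have hkk : kk = 0 := by
        funext j
        by_cases hj : j = i
        · rw [hj, h]; rfl
        · exact hk0 j hj
      have hpp0 : pp 0 = 0 := by rw [hp0, hkk]; simp
      have h2 := last_notmem hM' hv hs (-unitv i)
      have h3 : (fun j => pp (-unitv i + unitv i) j - unitv i j)
          = fun j => -(unitv i j) := by
        funext j
        rw [neg_add_cancel, hpp0]
        simp
      rw [h3] at h2
      rw [h]
      constructor
      · intro hy; exact absurd hy h2
      · intro hy; omega
    · have hsh : (ω₀ (xx 0)).1 i = 2 := by
        have h1 := hc i
        rcases shape_i_cases hM' (xx 0) with hh | hh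
        · rw [hh] at h1; omega
        · exact hh
      have hmem := (mark_iff hM' hv 0).2 hsh
      have hpp0 : pp 0 = fun j => -(unitv i j) := by
        rw [hp0]
        funext j
        by_cases hj : j = i
        · subst hj; simp [unitv, h]
        · simp [unitv, hj, hk0 j hj]
      rw [hpp0] at hmem
      rw [h]
      exact ⟨fun _ => rfl, fun _ => hmem⟩
  have hky := hkc k x p hvv hss hp0 hcen hk0
  have hky' := hkc k' x' p' hvv' hss' hp0' hcen' hk0'
  have hkk : k = k' := by
    funext j
    by_cases hj : j = i
    · subst hj
      have hiff : k j = 1 ↔ k' j = 1 := by rw [← hky, ← hky']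
      rcases hbound k x hcen with h1 | h1 <;>
        rcases hbound k' x' hcen' with h2 | h2 <;> omega
    · rw [hk0 j hj, hk0' j hj]
  -- shapes agree wherever positions agree
  have hsame : ∀ n, p n = p' n → (ω₀ (x n)).1 i = (ω₀ (x' n)).1 i := by
    intro n h
    have h1 := mark_iff hM' hvv n
    have h2 := mark_iff hM' hvv' n
    rw [h] at h1
    by_cases hy : y (p' n) ∈ M
    · rw [h1.1 hy, h2.1 hy]
    · have a1 : (ω₀ (x n)).1 i ≠ 2 := fun hc2 => hy (h1.2 hc2)
      have a2 : (ω₀ (x' n)).1 i ≠ 2 := fun hc2 => hy (h2.2 hc2)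
      rcases shape_i_cases hM' (x n) with hx1 | hx1 <;>
        rcases shape_i_cases hM' (x' n) with hx2 | hx2 <;> omega
  have hfwd : ∀ n, p n = p' n → p (n + unitv i) = p' (n + unitv i) := by
    intro n h
    rw [hs n i, hs' n i, h, hsame n h]
  have hbwd : ∀ n, p (n + unitv i) = p' (n + unitv i) → p n = p' n := by
    intro n h
    have h1 := back_iff hM' hvv hss n
    have h2 := back_iff hM' hvv' hss' n
    rw [h] at h1
    have hse : (ω₀ (x n)).1 i = (ω₀ (x' n)).1 i := by
      by_cases hy : y (fun j => p' (n + unitv i) j - 2 * unitv i j) ∈ M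
      · rw [h1.2 hy, h2.2 hy]
      · have a1 : (ω₀ (x n)).1 i ≠ 2 := fun hc2 => hy (h1.1 hc2)
        have a2 : (ω₀ (x' n)).1 i ≠ 2 := fun hc2 => hy (h2.1 hc2)
        rcases shape_i_cases hM' (x n) with hx1 | hx1 <;>
          rcases shape_i_cases hM' (x' n) with hx2 | hx2 <;> omega
    have e1 := hs n i
    have e2 := hs' n i
    rw [hse, h] at e1
    have e3 := e1.symm.trans e2
    exact add_right_cancel e3
  have haxis : ∀ t : ℤ, p (t • unitv i) = p' (t • unitv i) := by
    intro t
    induction t using Int.induction_on with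
    | zero =>
        rw [zero_smul, hp0, hp0', hkk]
    | succ t ih =>
        have h1 : ((t : ℤ) + 1) • unitv i = (t : ℤ) • unitv i + unitv i := by
          rw [add_smul, one_smul]
        rw [h1]
        exact hfwd _ ih
    | pred t ih =>
        have h1 : (-(t : ℤ) - 1) • unitv i + unitv i = (-(t : ℤ)) • unitv i := by
          rw [sub_smul, one_smul, sub_add_cancel]
        apply hbwd
        rw [h1]
        exact ih
  have hpp : ∀ n, p n = p' n := by
    intro n
    have hdec : n = (n i) • unitv i + (n - (n i) • unitv i) := by
      funext j
      simp
    have hmi : (n - (n i) • unitv i) i = 0 := by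
      simp [unitv]
    calc p n = p ((n i) • unitv i + (n - n i • unitv i)) := by rw [← hdec]
      _ = p ((n i) • unitv i) + (n - n i • unitv i) := move hM' hss _ _ hmi
      _ = p' ((n i) • unitv i) + (n - n i • unitv i) := by rw [haxis]
      _ = p' ((n i) • unitv i + (n - n i • unitv i)) := (move hM' hss' _ _ hmi).symm
      _ = p' n := by rw [← hdec]
  refine ⟨hkk, ?_⟩
  funext n
  apply hinj
  have hpn := hpp n
  rcases hM (x n) with ⟨b, hbM, hb⟩ | ⟨b, c, hbM, hcM, hb⟩ <;>
    rcases hM (x' n) with ⟨b', hbM', hb'⟩ | ⟨b', c', hbM', hcM', hb'⟩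
  · have e1 := read_letter hvv n hb
    have e2 := read_letter hvv' n hb'
    rw [hpn] at e1
    rw [hb, hb', e1.symm.trans e2]
  · exfalso
    have e1 := read_letter hvv n hb
    have e2 := (read_domino hvv' n hb').1
    rw [hpn] at e1
    exact hbM ((e1.symm.trans e2) ▸ hbM')
  · exfalso
    have e1 := (read_domino hvv n hb).1
    have e2 := read_letter hvv' n hb'
    rw [hpn] at e1
    exact hbM' ((e1.symm.trans e2) ▸ hbM)
  · have e1 := read_domino hvv n hb
    have e2 := read_domino hvv' n hb'
    rw [hpn] at e1
    have eb : b = b' := e1.1.symm.trans e2.1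
    have ec : c = c' := e1.2.symm.trans e2.2
    rw [hb, hb', eb, ec]
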